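/- Let 0 < ε ≤ 1/16 and let γ = (γ₁, γ₂, γ₃, γ₄) : [0, t*] → ℝ⁴ be a C¹ curve such that |γ̇(t)| ≤ 2 for all t, γ̇₃(t) ≥ 1 whenever |γ₃(t)| ≤ √ε, and γ starts on the set {x₁² + x₂² = ε, x₃ = 0}, i.e. γ₁(0)² + γ₂(0)² = ε and γ₃(0) = 0. Then γ never enters the lens {x ∈ ℝ⁴ : x₁² + x₂² + x₃² ≤ ε²}: for every t ∈ [0, t*], γ₁(t)² + γ₂(t)² + γ₃(t)² > ε². -/
import Mathlib

open Set

/-- Arithmetic core of the lens-avoidance argument. -/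
theorem lens_arith (ε s t a b a0 b0 gt : ℝ) (hε0 : 0 < ε) (hε : ε ≤ 1/16)
    (hs0 : 0 < s) (hs2 : s ^ 2 = ε) (ht0 : 0 ≤ t)
    (hst : a0 ^ 2 + b0 ^ 2 = ε) (hco : (a - a0) ^ 2 + (b - b0) ^ 2 ≤ 4 * t ^ 2)
    (hmin : min t s ≤ gt) : ε ^ 2 < a ^ 2 + b ^ 2 + gt ^ 2 := by
  have hεε : ε ^ 2 ≤ ε / 16 := by
    linarith [mul_nonneg hε0.le (sub_nonneg.mpr hε)]
  rcases le_or_gt s gt with h | h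
  · have hgt2 : s ^ 2 ≤ gt ^ 2 := pow_le_pow_left₀ hs0.le h 2
    linarith [sq_nonneg a, sq_nonneg b]
  · have htle : t < s := by
      by_contra h'
      push_neg at h'
      rw [min_eq_right h'] at hmin
      linarith
    have hts : t ≤ gt := by rwa [min_eq_left htle.le] at hmin
    have hgt0 : 0 ≤ gt := le_trans ht0 hts
    have hgt2 : t ^ 2 ≤ gt ^ 2 := pow_le_pow_left₀ ht0 hts 2
    rcases le_or_gt (2 * t) s with h2 | h2
    · have hcs : (a * a0 + b * b0) ^ 2 ≤ (a ^ 2 + b ^ 2) * ε := by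
        rw [← hst]
        linarith [sq_nonneg (a * b0 - b * a0)]
      have hm : 0 ≤ ε - 4 * t ^ 2 := by
        rw [← hs2]
        linarith [mul_nonneg (show (0:ℝ) ≤ s - 2*t by linarith)
          (show (0:ℝ) ≤ s + 2*t by linarith)]
      have h2P : a ^ 2 + b ^ 2 + (ε - 4 * t ^ 2) ≤ 2 * (a * a0 + b * b0) := by
        linarith [hco, hst]
      have hAm0 : 0 ≤ a ^ 2 + b ^ 2 + (ε - 4 * t ^ 2) := by
        linarith [sq_nonneg a, sq_nonneg b]
      have hsq : (a ^ 2 + b ^ 2 + (ε - 4 * t ^ 2)) ^ 2 ≤ 4 * ((a ^ 2 + b ^ 2) * ε) := by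
        calc (a ^ 2 + b ^ 2 + (ε - 4 * t ^ 2)) ^ 2
            ≤ (2 * (a * a0 + b * b0)) ^ 2 := by
              have := pow_le_pow_left₀ hAm0 h2P 2
              linarith
          _ = 4 * (a * a0 + b * b0) ^ 2 := by ring
          _ ≤ 4 * ((a ^ 2 + b ^ 2) * ε) := by linarith
      rw [← hs2] at hsq
      have hlow : (s - 2 * t) ^ 2 ≤ a ^ 2 + b ^ 2 := by
        by_contra hA
        push_neg at hA
        have hv : 0 < (s + 2 * t) ^ 2 - (a ^ 2 + b ^ 2) := by
          linarith [mul_nonneg hs0.le ht0]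
        have hprod : 0 < ((s - 2 * t) ^ 2 - (a ^ 2 + b ^ 2)) *
            ((s + 2 * t) ^ 2 - (a ^ 2 + b ^ 2)) := mul_pos (by linarith) hv
        nlinarith [hsq, hprod]
      have h5 : s ^ 2 / 5 ≤ (s - 2 * t) ^ 2 + t ^ 2 := by
        linarith [sq_nonneg (2 * s - 5 * t)]
      linarith [hlow, hgt2, h5, hs2.ge, hs2.le]
    · have h4 : ε < 4 * t ^ 2 := by
        have := mul_self_lt_mul_self hs0.le h2
        nlinarith
      linarith [sq_nonneg a, sq_nonneg b, hgt2, h4]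

/-- **Lens avoidance.** Let `0 < ε ≤ 1/16` and let `γ : [0, t*] → ℝ⁴` be a C¹
curve with speed at most `2`, with `γ̇₃(t) ≥ 1` whenever `|γ₃(t)| ≤ √ε`, and
starting on the set `{x₁² + x₂² = ε, x₃ = 0}`.  Then `γ` never enters the lens
`{x₁² + x₂² + x₃² ≤ ε²}`.  (Coordinates: `0 ↦ x₁`, `1 ↦ x₂`, `2 ↦ x₃`, `3 ↦ x₄`.) -/
theorem lens_avoidance (ε tst : ℝ) (hε0 : 0 < ε) (hε : ε ≤ 1/16) (htst : 0 ≤ tst)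
    (γ γ' : ℝ → EuclideanSpace ℝ (Fin 4))
    (hderiv : ∀ t ∈ Set.Icc 0 tst, HasDerivAt γ (γ' t) t)
    (hcont : ContinuousOn γ' (Set.Icc 0 tst))
    (hspeed : ∀ t ∈ Set.Icc 0 tst, ‖γ' t‖ ≤ 2)
    (hx3 : ∀ t ∈ Set.Icc 0 tst, |γ t 2| ≤ Real.sqrt ε → 1 ≤ γ' t 2)
    (hstart1 : (γ 0 0) ^ 2 + (γ 0 1) ^ 2 = ε) (hstart2 : γ 0 2 = 0) :
    ∀ t ∈ Set.Icc 0 tst,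
      ε ^ 2 < (γ t 0) ^ 2 + (γ t 1) ^ 2 + (γ t 2) ^ 2 := by
  set s := Real.sqrt ε with hsdef
  have hs0 : 0 < s := Real.sqrt_pos.mpr hε0
  have hs2 : s ^ 2 = ε := Real.sq_sqrt hε0.le
  set g : ℝ → ℝ := fun u => γ u 2 with hgdef
  have hgderiv : ∀ u ∈ Set.Icc 0 tst, HasDerivAt g (γ' u 2) u := by
    intro u hu
    exact (EuclideanSpace.proj (2 : Fin 4)).hasFDerivAt.comp_hasDerivAt u (hderiv u hu)
  -- barrier lemma: for every c ∈ [0,1), min (c·u) √ε ≤ g u on [0, tst]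
  have key : ∀ c : ℝ, 0 ≤ c → c < 1 → ∀ u ∈ Set.Icc 0 tst, min (c * u) s ≤ g u := by
    intro c hc0 hc1
    have hfcont : ContinuousOn (fun u : ℝ => min (c * u) s) (Set.Icc 0 tst) :=
      ((continuous_const.mul continuous_id).min continuous_const).continuousOn
    have hBcont : ContinuousOn g (Set.Icc 0 tst) := fun x hx =>
      (hgderiv x hx).continuousAt.continuousWithinAt
    have hf' : ∀ x ∈ Set.Ico 0 tst, ∀ r : ℝ, (fun _ : ℝ => c) x < r →
        ∃ᶠ z in nhdsWithin x (Set.Ioi x), slope (fun u : ℝ => min (c * u) s) x z < r := by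
      intro x _ r hr
      refine Filter.Eventually.frequently ?_
      filter_upwards [self_mem_nhdsWithin] with z hz
      have hzx : x < z := hz
      have hmono : min (c * z) s ≤ min (c * x) s + c * (z - x) := by
        rcases le_total (c * x) s with h | h
        · calc min (c * z) s ≤ c * z := min_le_left _ _
            _ = c * x + c * (z - x) := by ring
            _ = min (c * x) s + c * (z - x) := by rw [min_eq_left h]
        · calc min (c * z) s ≤ s := min_le_right _ _
            _ ≤ s + c * (z - x) := by nlinarith
            _ = min (c * x) s + c * (z - x) := by rw [min_eq_right h]
      have hsl : slope (fun u : ℝ => min (c * u) s) x z ≤ c := by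
        rw [slope_def_field, div_le_iff₀ (by linarith : (0:ℝ) < z - x)]
        linarith
      linarith
    have ha : min (c * 0) s ≤ g 0 := by
      have hg0 : g 0 = 0 := hstart2
      rw [hg0, mul_zero, min_eq_left hs0.le]
    have bound : ∀ x ∈ Set.Ico 0 tst, min (c * x) s = g x → (fun _ : ℝ => c) x < γ' x 2 := by
      intro x hx hgx
      have hx' : x ∈ Set.Icc 0 tst := Set.Ico_subset_Icc_self hx
      have h0 : 0 ≤ min (c * x) s := le_min (mul_nonneg hc0 hx.1) hs0.le
      have h1 : min (c * x) s ≤ s := min_le_right _ _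
      have habs : |γ x 2| ≤ s := by
        rw [abs_le]
        constructor <;> [linarith [hgx ▸ h0]; linarith [hgx ▸ h1]]
      have := hx3 x hx' habs
      linarith
    exact image_le_of_liminf_slope_right_lt_deriv_boundary' hfcont hf' ha hBcont
      (fun x hx => (hgderiv x (Set.Ico_subset_Icc_self hx)).hasDerivWithinAt) bound
  intro t ht
  have key1 : min t s ≤ g t := by
    have htend : Filter.Tendsto (fun c : ℝ => min (c * t) s)
        (nhdsWithin 1 (Set.Iio 1)) (nhds (min t s)) := by
      have h1 : Filter.Tendsto (fun c : ℝ => min (c * t) s) (nhds 1) (nhds (min (1 * t) s)) :=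
        ((continuous_id.mul continuous_const).min continuous_const).tendsto 1
      rw [one_mul] at h1
      exact h1.mono_left nhdsWithin_le_nhds
    refine le_of_tendsto htend ?_
    filter_upwards [Ioo_mem_nhdsLT_of_mem (by norm_num : (1:ℝ) ∈ Set.Ioc (0:ℝ) 1)] with c hc
    exact key c hc.1.le hc.2 t ht
  -- Lipschitz bound on the configuration
  have hlip : ‖γ t - γ 0‖ ≤ 2 * t := by
    have h := (convex_Icc (0:ℝ) tst).norm_image_sub_le_of_norm_hasDerivWithin_le
      (fun x hx => (hderiv x hx).hasDerivWithinAt) hspeed (Set.left_mem_Icc.mpr htst) ht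
    simpa [abs_of_nonneg ht.1] using h
  have hcoord : (γ t 0 - γ 0 0) ^ 2 + (γ t 1 - γ 0 1) ^ 2 ≤ 4 * t ^ 2 := by
    have h1 : ‖γ t - γ 0‖ ^ 2 ≤ (2 * t) ^ 2 := by
      have := pow_le_pow_left₀ (norm_nonneg _) hlip 2
      linarith
    have h2 : ‖γ t - γ 0‖ ^ 2 = ∑ i : Fin 4, ((γ t - γ 0) i) ^ 2 := by
      rw [EuclideanSpace.norm_eq, Real.sq_sqrt (by positivity)]
      simp [Real.norm_eq_abs, sq_abs]
    rw [h2, Fin.sum_univ_four] at h1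
    have e : ∀ i : Fin 4, (γ t - γ 0) i = γ t i - γ 0 i := fun i => rfl
    rw [e 0, e 1, e 2, e 3] at h1
    nlinarith [sq_nonneg (γ t 2 - γ 0 2), sq_nonneg (γ t 3 - γ 0 3)]
  exact lens_arith ε s t (γ t 0) (γ t 1) (γ 0 0) (γ 0 1) (g t)
    hε0 hε hs0 hs2 ht.1 hstart1 hcoord key1
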